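/- The following are equivalent: (c₆) 𝒩₆ := co cone(𝒱 ∪ {(0_{X*},1)}) is a closed subset of X*×ℝ (weak*-topology on X* times the usual topology on ℝ); (d₆) for every c ∈ X* with inf(RLIP_c) > −∞ there exists λ̄ ∈ ℝ₊^{(𝒱)} such that c = −∑_{v∈supp λ̄} λ̄_v v¹ and −∑_{v∈supp λ̄} λ̄_v v² = inf(RLIP_c) (stable robust strong duality for the pair (RLIP_c)–(RLID⁶_c)). -/

import Mathlib

set_option linter.unusedSectionVars false

open Pointwise

variable {X : Type*} [AddCommGroup X] [Module ℝ X] [TopologicalSpace X]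
  [IsTopologicalAddGroup X] [ContinuousSMul ℝ X] [LocallyConvexSpace ℝ X] [T2Space X]
  {T : Type*}

/-- The cone generated by a set `A`: `cone A = {λa : λ ≥ 0, a ∈ A}`. -/
def coneSet {E : Type*} [SMul ℝ E] (A : Set E) : Set E :=
  {p | ∃ l : ℝ, 0 ≤ l ∧ ∃ a ∈ A, p = l • a}

/-- The optimal value of the robust primal problem (RLIP_c). -/
noncomputable def infRLIP (U : T → Set (WeakDual ℝ X × ℝ)) (c : WeakDual ℝ X) : EReal :=
  ⨅ x : {x : X | ∀ t, ∀ v ∈ U t, v.1 x ≤ v.2}, ((c x.1 : ℝ) : EReal)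

/-- Evaluation at a point, as a linear map on the weak dual. -/
noncomputable def evalL (x : X) : WeakDual ℝ X →ₗ[ℝ] ℝ where
  toFun φ := φ x
  map_add' _ _ := rfl
  map_smul' _ _ := rfl

@[simp] lemma evalL_apply (x : X) (φ : WeakDual ℝ X) : evalL x φ = φ x := rfl

/-- Evaluation at a point, as a continuous linear map on the weak dual. -/
noncomputable def evalCLM (x : X) : WeakDual ℝ X →L[ℝ] ℝ :=
  ⟨evalL x, WeakBilin.eval_continuous (topDualPairing ℝ X) x⟩

@[simp] lemma evalCLM_apply (x : X) (φ : WeakDual ℝ X) : evalCLM x φ = φ x := rfl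

/-- Every continuous linear functional on the weak-* dual is evaluation at a point. -/
theorem exists_eval (g : WeakDual ℝ X →L[ℝ] ℝ) : ∃ x : X, ∀ φ : WeakDual ℝ X, g φ = φ x := by
  classical
  have hV : g ⁻¹' Set.Ioo (-1 : ℝ) 1 ∈ nhds (0 : WeakDual ℝ X) := by
    apply g.continuous.continuousAt.preimage_mem_nhds
    rw [map_zero]
    exact Ioo_mem_nhds (by norm_num) (by norm_num)
  have hemb := WeakBilin.isEmbedding (B := topDualPairing ℝ X)
    ContinuousLinearMap.coe_injective
  rw [show nhds (0 : WeakDual ℝ X) = _ from hemb.toIsInducing.nhds_eq_comap 0,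
    ] at hV
  obtain ⟨S, hS, hSV⟩ := Filter.mem_comap.mp hV
  rw [nhds_pi, Filter.mem_pi] at hS
  obtain ⟨I, hIfin, t, ht, htS⟩ := hS
  have ht0 : ∀ x, (0 : ℝ) ∈ t x := by
    intro x
    have := ht x
    change t x ∈ nhds (0 : ℝ) at this
    exact mem_of_mem_nhds this
  have hker : ∀ φ : WeakDual ℝ X, (∀ x ∈ I, φ x = 0) → g φ = 0 := by
    intro φ hφ
    by_contra hne
    have hmem : ∀ n : ℝ, (fun y => topDualPairing ℝ X (n • φ) y) ∈ I.pi t := by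
      intro n x hx
      show ((topDualPairing ℝ X) (n • φ)) x ∈ t x
      have h1 : ((topDualPairing ℝ X) (n • φ)) x = n * φ x := by
        rfl
      rw [h1, hφ x hx, mul_zero]
      exact ht0 x
    have hIoo : ∀ n : ℝ, g (n • φ) ∈ Set.Ioo (-1 : ℝ) 1 := fun n => hSV (htS (hmem n))
    have := (hIoo (g φ)⁻¹).2
    rw [map_smul, smul_eq_mul, inv_mul_cancel₀ hne] at this
    exact lt_irrefl _ this
  haveI : Fintype I := hIfin.fintype
  have hker' : ⨅ i : I, LinearMap.ker (evalL (i : X)) ≤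
      LinearMap.ker (g : WeakDual ℝ X →ₗ[ℝ] ℝ) := by
    intro φ hφ
    rw [Submodule.mem_iInf] at hφ
    rw [LinearMap.mem_ker]
    exact hker φ fun x hx => hφ ⟨x, hx⟩
  have hspan := mem_span_of_iInf_ker_le_ker hker'
  rw [Submodule.mem_span_range_iff_exists_fun] at hspan
  obtain ⟨cc, hcc⟩ := hspan
  refine ⟨∑ i : I, cc i • (i : X), fun φ => ?_⟩
  have h2 := congrArg (fun L : WeakDual ℝ X →ₗ[ℝ] ℝ => L φ) hcc
  simp only [LinearMap.coe_sum, Finset.sum_apply, LinearMap.smul_apply, evalL_apply,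
    smul_eq_mul, ContinuousLinearMap.coe_coe] at h2
  rw [← h2, map_sum]
  simp [map_smul, smul_eq_mul]

section Hull

variable {E : Type*} [AddCommGroup E] [Module ℝ E]

lemma smul_mem_hull_coneSet (A : Set E) {l : ℝ} (hl : 0 ≤ l) {p : E}
    (hp : p ∈ convexHull ℝ (coneSet A)) : l • p ∈ convexHull ℝ (coneSet A) := by
  have h1 : l • p ∈ l • convexHull ℝ (coneSet A) := Set.smul_mem_smul_set hp
  rw [← convexHull_smul] at h1
  refine convexHull_mono ?_ h1
  rintro q ⟨y, ⟨l', hl', a, ha, rfl⟩, rfl⟩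
  exact ⟨l * l', mul_nonneg hl hl', a, ha, (smul_smul l l' a)⟩

lemma add_mem_hull_coneSet (A : Set E) {p q : E}
    (hp : p ∈ convexHull ℝ (coneSet A)) (hq : q ∈ convexHull ℝ (coneSet A)) :
    p + q ∈ convexHull ℝ (coneSet A) := by
  have hmid : (1/2 : ℝ) • p + (1/2 : ℝ) • q ∈ convexHull ℝ (coneSet A) :=
    (convex_convexHull ℝ _) hp hq (by norm_num) (by norm_num) (by norm_num)
  have := smul_mem_hull_coneSet A (by norm_num : (0:ℝ) ≤ 2) hmid
  have heq : (2:ℝ) • ((1/2 : ℝ) • p + (1/2 : ℝ) • q) = p + q := by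
    rw [smul_add, smul_smul, smul_smul]; norm_num
  rwa [heq] at this

end Hull

noncomputable def comboPhi (U : T → Set (WeakDual ℝ X × ℝ)) :
    ((⋃ t, U t : Set (WeakDual ℝ X × ℝ)) →₀ ℝ) →ₗ[ℝ] (WeakDual ℝ X × ℝ) :=
  Finsupp.lsum ℝ fun v => LinearMap.toSpanSingleton ℝ (WeakDual ℝ X × ℝ)
    (v : WeakDual ℝ X × ℝ)

lemma comboPhi_apply (U : T → Set (WeakDual ℝ X × ℝ))
    (μ : (⋃ t, U t : Set (WeakDual ℝ X × ℝ)) →₀ ℝ) :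
    comboPhi U μ = μ.sum fun v a => a • (v : WeakDual ℝ X × ℝ) := rfl

lemma comboPhi_comp (U : T → Set (WeakDual ℝ X × ℝ))
    (μ : (⋃ t, U t : Set (WeakDual ℝ X × ℝ)) →₀ ℝ) :
    comboPhi U μ = (μ.sum fun v a => a • (v : WeakDual ℝ X × ℝ).1,
      μ.sum fun v a => a * (v : WeakDual ℝ X × ℝ).2) := by
  rw [comboPhi_apply, Finsupp.sum, Finsupp.sum, Finsupp.sum]
  refine Prod.ext ?_ ?_
  · rw [Prod.fst_sum]
    rfl
  · rw [Prod.snd_sum]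
    rfl

theorem hullEq (U : T → Set (WeakDual ℝ X × ℝ)) :
    convexHull ℝ (coneSet ((⋃ t, U t) ∪ {((0 : WeakDual ℝ X), (1 : ℝ))})) =
    {p : WeakDual ℝ X × ℝ | ∃ μ : (⋃ t, U t : Set (WeakDual ℝ X × ℝ)) →₀ ℝ, ∃ β : ℝ,
      0 ≤ β ∧ (∀ v, 0 ≤ μ v) ∧
      p.1 = μ.sum (fun v a => a • (v : WeakDual ℝ X × ℝ).1) ∧
      p.2 = μ.sum (fun v a => a * (v : WeakDual ℝ X × ℝ).2) + β} := by
  classical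
  have hMp : ∀ p : WeakDual ℝ X × ℝ, (∃ μ : (⋃ t, U t : Set (WeakDual ℝ X × ℝ)) →₀ ℝ, ∃ β : ℝ,
      0 ≤ β ∧ (∀ v, 0 ≤ μ v) ∧
      p.1 = μ.sum (fun v a => a • (v : WeakDual ℝ X × ℝ).1) ∧
      p.2 = μ.sum (fun v a => a * (v : WeakDual ℝ X × ℝ).2) + β) ↔
      (∃ μ : (⋃ t, U t : Set (WeakDual ℝ X × ℝ)) →₀ ℝ, ∃ β : ℝ, 0 ≤ β ∧ (∀ v, 0 ≤ μ v) ∧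
        p = comboPhi U μ + β • ((0 : WeakDual ℝ X), (1 : ℝ))) := by
    intro p
    constructor
    · rintro ⟨μ, β, hβ, hμ, h1, h2⟩
      refine ⟨μ, β, hβ, hμ, ?_⟩
      rw [comboPhi_comp]
      refine Prod.ext ?_ ?_
      · simpa [Prod.fst_add, Prod.smul_mk, smul_zero] using h1
      · simpa [Prod.snd_add, Prod.smul_mk, smul_eq_mul] using h2
    · rintro ⟨μ, β, hβ, hμ, h⟩
      refine ⟨μ, β, hβ, hμ, ?_, ?_⟩
      · rw [h, comboPhi_comp]; simp [Prod.fst_add, Prod.smul_mk, smul_zero]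
      · rw [h, comboPhi_comp]; simp [Prod.snd_add, Prod.smul_mk, smul_eq_mul]
  ext p
  simp only [Set.mem_setOf_eq]
  rw [hMp]
  constructor
  · intro hp
    have hsub : convexHull ℝ (coneSet ((⋃ t, U t) ∪ {((0 : WeakDual ℝ X), (1 : ℝ))})) ⊆
        {q : WeakDual ℝ X × ℝ | ∃ μ : (⋃ t, U t : Set (WeakDual ℝ X × ℝ)) →₀ ℝ, ∃ β : ℝ,
          0 ≤ β ∧ (∀ v, 0 ≤ μ v) ∧
          q = comboPhi U μ + β • ((0 : WeakDual ℝ X), (1 : ℝ))} := by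
      apply convexHull_min
      · rintro q ⟨l, hl, a, ha, rfl⟩
        rcases ha with ha | ha
        · refine ⟨Finsupp.single ⟨a, ha⟩ l, 0, le_refl _, ?_, ?_⟩
          · intro v
            rw [Finsupp.single_apply]
            split <;> simp [hl]
          · rw [comboPhi_apply, Finsupp.sum_single_index (by simp)]
            simp
        · rw [Set.mem_singleton_iff] at ha
          subst ha
          exact ⟨0, l, hl, fun v => le_refl _, by simp [comboPhi_apply]⟩
      · rintro q ⟨μ₁, β₁, hβ₁, hμ₁, rfl⟩ r ⟨μ₂, β₂, hβ₂, hμ₂, rfl⟩ s u hs hu hsu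
        refine ⟨s • μ₁ + u • μ₂, s * β₁ + u * β₂, by positivity, ?_, ?_⟩
        · intro v
          simp only [Finsupp.add_apply, Finsupp.smul_apply, smul_eq_mul]
          have := hμ₁ v; have := hμ₂ v
          positivity
        · rw [map_add, map_smul, map_smul]
          module
    exact hsub hp
  · rintro ⟨μ, β, hβ, hμ, rfl⟩
    have hsubN : coneSet ((⋃ t, U t) ∪ {((0 : WeakDual ℝ X), (1 : ℝ))}) ⊆
        convexHull ℝ (coneSet ((⋃ t, U t) ∪ {((0 : WeakDual ℝ X), (1 : ℝ))})) :=
      subset_convexHull ℝ _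
    have hβe : β • ((0 : WeakDual ℝ X), (1 : ℝ)) ∈
        convexHull ℝ (coneSet ((⋃ t, U t) ∪ {((0 : WeakDual ℝ X), (1 : ℝ))})) :=
      hsubN ⟨β, hβ, _, Or.inr rfl, rfl⟩
    have hΦμ : comboPhi U μ ∈
        convexHull ℝ (coneSet ((⋃ t, U t) ∪ {((0 : WeakDual ℝ X), (1 : ℝ))})) := by
      rw [comboPhi_apply, Finsupp.sum]
      refine Finset.sum_induction _ (· ∈ _) (fun a b ha hb => add_mem_hull_coneSet _ ha hb)
        (hsubN ⟨0, le_refl _, _, Or.inr rfl, (zero_smul ℝ _).symm⟩) ?_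
      intro v _
      exact hsubN ⟨μ v, hμ v, (v : WeakDual ℝ X × ℝ), Or.inl v.2, rfl⟩
    exact add_mem_hull_coneSet _ hΦμ hβe

theorem stmt16 [Nonempty T] (U : T → Set (WeakDual ℝ X × ℝ)) (hU : ∀ t, (U t).Nonempty)
    (hF : {x : X | ∀ t, ∀ v ∈ U t, v.1 x ≤ v.2}.Nonempty) :
    IsClosed (convexHull ℝ
        (coneSet ((⋃ t, U t) ∪ {((0 : WeakDual ℝ X), (1 : ℝ))}))) ↔
    (∀ c : WeakDual ℝ X, ⊥ < infRLIP U c →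
      ∃ μ : (⋃ t, U t : Set (WeakDual ℝ X × ℝ)) →₀ ℝ,
        (∀ v, 0 ≤ μ v) ∧ c = -(μ.sum fun v a => a • (v : WeakDual ℝ X × ℝ).1) ∧
        ((-(μ.sum fun v a => a * (v : WeakDual ℝ X × ℝ).2) : ℝ) : EReal) = infRLIP U c) := by
  classical
  have hneg1 : ∀ (ψ : WeakDual ℝ X) (y : X), (-ψ) y = -(ψ y) := fun ψ y => map_neg (evalL y) ψ
  have hSx : ∀ (μ : (⋃ t, U t : Set (WeakDual ℝ X × ℝ)) →₀ ℝ) (x : X),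
      (μ.sum fun v a => a • (v : WeakDual ℝ X × ℝ).1) x
        = μ.sum fun v a => a * ((v : WeakDual ℝ X × ℝ).1 x) := by
    intro μ x
    rw [Finsupp.sum, Finsupp.sum]
    show evalL x (∑ v ∈ μ.support, μ v • (v : WeakDual ℝ X × ℝ).1) = _
    rw [map_sum]
    simp [smul_eq_mul]
  have hwd : ∀ (μ : (⋃ t, U t : Set (WeakDual ℝ X × ℝ)) →₀ ℝ), (∀ v, 0 ≤ μ v) →
      ∀ x ∈ {x : X | ∀ t, ∀ v ∈ U t, v.1 x ≤ v.2},
      (μ.sum fun v a => a * ((v : WeakDual ℝ X × ℝ).1 x))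
        ≤ μ.sum fun v a => a * (v : WeakDual ℝ X × ℝ).2 := by
    intro μ hμ x hx
    rw [Finsupp.sum, Finsupp.sum]
    refine Finset.sum_le_sum ?_
    intro v _
    obtain ⟨s, hs⟩ := Set.mem_iUnion.mp v.2
    exact mul_le_mul_of_nonneg_left (hx s _ hs) (hμ v)
  constructor
  · intro hclosed c hc
    obtain ⟨x₀, hx₀⟩ := hF
    haveI : Nonempty {x : X | ∀ t, ∀ v ∈ U t, v.1 x ≤ v.2} := ⟨⟨x₀, hx₀⟩⟩
    have hle0 : infRLIP U c ≤ ((c x₀ : ℝ) : EReal) := by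
      unfold infRLIP
      exact iInf_le (fun x : {x : X | ∀ t, ∀ v ∈ U t, v.1 x ≤ v.2} => ((c x.1 : ℝ) : EReal))
        ⟨x₀, hx₀⟩
    have hnetop : infRLIP U c ≠ ⊤ :=
      ne_top_of_le_ne_top (EReal.coe_ne_top (c x₀)) hle0
    set m := (infRLIP U c).toReal with hmdef
    have hm : (m : EReal) = infRLIP U c := EReal.coe_toReal hnetop hc.ne'
    have hlb : ∀ x ∈ {x : X | ∀ t, ∀ v ∈ U t, v.1 x ≤ v.2}, m ≤ c x := by
      intro x hx
      have h1 : infRLIP U c ≤ ((c x : ℝ) : EReal) := by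
        unfold infRLIP
        exact iInf_le (fun x : {x : X | ∀ t, ∀ v ∈ U t, v.1 x ≤ v.2} => ((c x.1 : ℝ) : EReal))
          ⟨x, hx⟩
      rw [← hm] at h1
      exact EReal.coe_le_coe_iff.mp h1
    have hglb : ∀ b : ℝ, (∀ x ∈ {x : X | ∀ t, ∀ v ∈ U t, v.1 x ≤ v.2}, b ≤ c x) → b ≤ m := by
      intro b hb
      have h1 : ((b : ℝ) : EReal) ≤ infRLIP U c := by
        unfold infRLIP
        exact le_iInf fun x => EReal.coe_le_coe_iff.mpr (hb x.1 x.2)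
      rw [← hm] at h1
      exact EReal.coe_le_coe_iff.mp h1
    have hmem : ((-c : WeakDual ℝ X), (-m : ℝ)) ∈
        convexHull ℝ (coneSet ((⋃ t, U t) ∪ {((0 : WeakDual ℝ X), (1 : ℝ))})) := by
      by_contra hnot
      haveI : LocallyConvexSpace ℝ (WeakDual ℝ X) := WeakBilin.locallyConvexSpace
      obtain ⟨f, u, hfu, hub⟩ :=
        geometric_hahn_banach_point_closed (convex_convexHull ℝ _) hclosed hnot
      have h0N : (0 : WeakDual ℝ X × ℝ) ∈
          convexHull ℝ (coneSet ((⋃ t, U t) ∪ {((0 : WeakDual ℝ X), (1 : ℝ))})) :=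
        subset_convexHull ℝ _ ⟨0, le_refl _, ((0 : WeakDual ℝ X), (1 : ℝ)), Or.inr rfl,
          (zero_smul ℝ _).symm⟩
      have hu0 : u < 0 := by simpa using hub 0 h0N
      have hfN : ∀ b ∈ convexHull ℝ
          (coneSet ((⋃ t, U t) ∪ {((0 : WeakDual ℝ X), (1 : ℝ))})), 0 ≤ f b := by
        intro b hb
        by_contra hfb
        push_neg at hfb
        have hl : 0 ≤ (u - 1) / f b := div_nonneg_iff.mpr (Or.inr ⟨by linarith, hfb.le⟩)
        have h2 := hub _ (smul_mem_hull_coneSet _ hl hb)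
        rw [map_smul, smul_eq_mul, div_mul_cancel₀ _ (ne_of_lt hfb)] at h2
        linarith
      obtain ⟨xbar, hxbar⟩ := exists_eval (f.comp (ContinuousLinearMap.inl ℝ (WeakDual ℝ X) ℝ))
      set s := f ((0 : WeakDual ℝ X), (1 : ℝ)) with hsdef
      have hfdec : ∀ (φ : WeakDual ℝ X) (r : ℝ), f (φ, r) = φ xbar + r * s := by
        intro φ r
        have h1 : ((φ, r) : WeakDual ℝ X × ℝ)
            = ((φ, 0) : WeakDual ℝ X × ℝ) + r • ((0 : WeakDual ℝ X), (1 : ℝ)) := by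
          refine Prod.ext ?_ ?_ <;> simp
        rw [h1, map_add, map_smul, smul_eq_mul]
        have h2 : f ((φ, 0) : WeakDual ℝ X × ℝ) = φ xbar := by
          have h3 := hxbar φ
          simpa using h3
        rw [h2]
      have hsnn : 0 ≤ s := by
        have h1 : ((0 : WeakDual ℝ X), (1 : ℝ)) ∈
            convexHull ℝ (coneSet ((⋃ t, U t) ∪ {((0 : WeakDual ℝ X), (1 : ℝ))})) :=
          subset_convexHull ℝ _ ⟨1, zero_le_one, _, Or.inr rfl, (one_smul ℝ _).symm⟩
        simpa [hsdef] using hfN _ h1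
      have hvN : ∀ v ∈ (⋃ t, U t : Set (WeakDual ℝ X × ℝ)), 0 ≤ v.1 xbar + v.2 * s := by
        intro v hv
        have h1 : v ∈ convexHull ℝ
            (coneSet ((⋃ t, U t) ∪ {((0 : WeakDual ℝ X), (1 : ℝ))})) :=
          subset_convexHull ℝ _ ⟨1, zero_le_one, v, Or.inl hv, (one_smul ℝ _).symm⟩
        have h2 := hfN v h1
        rwa [show v = (v.1, v.2) from rfl, hfdec] at h2
      have hneg : -(c xbar) + (-m) * s < 0 := by
        have h1 := hfu
        rw [hfdec, hneg1] at h1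
        linarith
      rcases eq_or_lt_of_le hsnn with hs0 | hs0
      · have hcx : 0 < c xbar := by
          rw [← hs0] at hneg
          simpa using hneg
        set lam := (c x₀ - m + 1) / c xbar with hlamdef
        have hlam : 0 ≤ lam := by
          have h5 := hlb x₀ hx₀
          apply div_nonneg
          · linarith
          · exact hcx.le
        have hmemF : (x₀ - lam • xbar) ∈ {x : X | ∀ t, ∀ v ∈ U t, v.1 x ≤ v.2} := by
          intro t v hvt
          have h1 : 0 ≤ v.1 xbar := by
            have h6 := hvN v (Set.mem_iUnion.mpr ⟨t, hvt⟩)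
            rw [← hs0] at h6
            simpa using h6
          have h2 : v.1 (x₀ - lam • xbar) = v.1 x₀ - lam * v.1 xbar := by
            rw [map_sub, map_smul, smul_eq_mul]
          rw [h2]
          have h7 := hx₀ t v hvt
          nlinarith
        have h3 := hlb _ hmemF
        rw [map_sub, map_smul, smul_eq_mul] at h3
        have h4 : lam * c xbar = c x₀ - m + 1 := div_mul_cancel₀ _ (ne_of_gt hcx)
        linarith
      · have hmemF : ((-s⁻¹) • xbar) ∈ {x : X | ∀ t, ∀ v ∈ U t, v.1 x ≤ v.2} := by
          intro t v hvt
          have h1 := hvN v (Set.mem_iUnion.mpr ⟨t, hvt⟩)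
          rw [map_smul, smul_eq_mul]
          have hsne : s ≠ 0 := ne_of_gt hs0
          have h3 : 0 < s⁻¹ := inv_pos.mpr hs0
          have h5 : s⁻¹ * (v.1 xbar + v.2 * s) = s⁻¹ * v.1 xbar + v.2 := by
            field_simp
          have h4 : 0 ≤ s⁻¹ * v.1 xbar + v.2 := h5 ▸ mul_nonneg h3.le h1
          linarith
        have h3 := hlb _ hmemF
        rw [map_smul, smul_eq_mul] at h3
        have hsne : s ≠ 0 := ne_of_gt hs0
        have h6 : m * s ≤ -s⁻¹ * c xbar * s := mul_le_mul_of_nonneg_right h3 hs0.le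
        have h7 : -s⁻¹ * c xbar * s = -(c xbar) := by
          field_simp
        linarith
    rw [hullEq U] at hmem
    obtain ⟨μ, β, hβ, hμ, h1, h2⟩ := hmem
    have h1' : (-c : WeakDual ℝ X) = μ.sum fun v a => a • (v : WeakDual ℝ X × ℝ).1 := h1
    have h2' : (-m : ℝ) = (μ.sum fun v a => a * (v : WeakDual ℝ X × ℝ).2) + β := h2
    have hble : m + β ≤ m := by
      apply hglb
      intro x hx
      calc m + β = -(μ.sum fun v a => a * (v : WeakDual ℝ X × ℝ).2) := by linarith
        _ ≤ -(μ.sum fun v a => a * ((v : WeakDual ℝ X × ℝ).1 x)) :=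
            neg_le_neg (hwd μ hμ x hx)
        _ = -((μ.sum fun v a => a • (v : WeakDual ℝ X × ℝ).1) x) := by rw [hSx]
        _ = c x := by rw [← h1', hneg1, neg_neg]
    have hβ0 : β = 0 := le_antisymm (by linarith) hβ
    refine ⟨μ, hμ, ?_, ?_⟩
    · rw [← h1', neg_neg]
    · have h5 : -(μ.sum fun v a => a * (v : WeakDual ℝ X × ℝ).2) = m := by linarith
      rw [h5]
      exact hm
  · intro h
    apply isClosed_of_closure_subset
    intro p hp
    set c : WeakDual ℝ X := -p.1 with hcdef
    haveI : Nonempty {x : X | ∀ t, ∀ v ∈ U t, v.1 x ≤ v.2} := hF.to_subtype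
    have key : ∀ x ∈ {x : X | ∀ t, ∀ v ∈ U t, v.1 x ≤ v.2}, p.1 x ≤ p.2 := by
      intro x hx
      set G : (WeakDual ℝ X × ℝ) →L[ℝ] ℝ :=
        ContinuousLinearMap.snd ℝ (WeakDual ℝ X) ℝ -
          (evalCLM x).comp (ContinuousLinearMap.fst ℝ (WeakDual ℝ X) ℝ) with hGdef
      have hG : ∀ q : WeakDual ℝ X × ℝ, G q = q.2 - q.1 x := fun q => rfl
      have hsub : convexHull ℝ (coneSet ((⋃ t, U t) ∪ {((0 : WeakDual ℝ X), (1 : ℝ))})) ⊆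
          G ⁻¹' Set.Ici 0 := by
        apply convexHull_min
        · rintro q ⟨l, hl, a, ha, rfl⟩
          rw [Set.mem_preimage, Set.mem_Ici, map_smul, smul_eq_mul, hG]
          rcases ha with ha | ha
          · obtain ⟨t, ht⟩ := Set.mem_iUnion.mp ha
            have h9 := hx t a ht
            nlinarith
          · rw [Set.mem_singleton_iff] at ha
            subst ha
            rw [show ((0 : WeakDual ℝ X)) x = 0 from map_zero (evalL x)]
            simpa using hl
        · exact (convex_Ici (0 : ℝ)).linear_preimage (G : (WeakDual ℝ X × ℝ) →ₗ[ℝ] ℝ)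
      have hcl : IsClosed (G ⁻¹' Set.Ici 0) := (isClosed_Ici).preimage G.continuous
      have h0 : (0 : ℝ) ≤ G p := closure_minimal hsub hcl hp
      rw [hG] at h0
      linarith
    have hlow : ((-p.2 : ℝ) : EReal) ≤ infRLIP U c := by
      unfold infRLIP
      refine le_iInf fun x => EReal.coe_le_coe_iff.mpr ?_
      have h9 := key x.1 x.2
      have hcx : c x.1 = -(p.1 x.1) := hneg1 p.1 x.1
      rw [hcx]
      linarith
    obtain ⟨μ, hμ, h1, h2⟩ := h c (lt_of_lt_of_le (EReal.bot_lt_coe _) hlow)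
    rw [hullEq U]
    have hm2 : -p.2 ≤ -(μ.sum fun v a => a * (v : WeakDual ℝ X × ℝ).2) :=
      EReal.coe_le_coe_iff.mp (by rw [h2]; exact hlow)
    refine ⟨μ, p.2 - μ.sum (fun v a => a * (v : WeakDual ℝ X × ℝ).2), by linarith, hμ, ?_,
      by ring⟩
    exact neg_injective (hcdef.symm.trans h1)
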